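/- Let G be a group and let B₁ and B₂ be two G-boundaries, each having the universal property that every G-boundary is the image of it under a continuous G-equivariant surjection. Then B₁ and B₂ are isomorphic as G-spaces: there exists a G-equivariant homeomorphism B₁ → B₂. -/

import Mathlib

open MeasureTheory

/-- The Dirac probability measure at a point. -/
noncomputable def diracProb {X : Type*} [MeasurableSpace X] (x : X) :
    ProbabilityMeasure X :=
  ⟨Measure.dirac x, inferInstance⟩

/-- The pushforward action of a group element on probability measures:
`(g • μ)(E) = μ (g⁻¹ • E)`. -/
noncomputable def pushforwardProb {G X : Type*} [Group G] [TopologicalSpace X]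
    [MeasurableSpace X] [BorelSpace X] [MulAction G X] [ContinuousConstSMul G X]
    (g : G) (μ : ProbabilityMeasure X) : ProbabilityMeasure X :=
  μ.map (f := fun x => g • x) ((continuous_const_smul g).measurable.aemeasurable)

/-- The action of `G` on `X` is minimal if every orbit is dense. -/
def IsMinimalAction (G X : Type*) [Group G] [TopologicalSpace X] [MulAction G X] : Prop :=
  ∀ x : X, Dense (MulAction.orbit G x)

/-- The action of `G` on `X` is strongly proximal if the weak-* closure of the orbit of every
probability measure on `X` contains a Dirac measure. -/
def IsStronglyProximal (G X : Type*) [Group G] [TopologicalSpace X] [MeasurableSpace X]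
    [BorelSpace X] [MulAction G X] [ContinuousConstSMul G X] : Prop :=
  ∀ μ : ProbabilityMeasure X, ∃ x : X,
    diracProb x ∈ closure {ν | ∃ g : G, ν = pushforwardProb g μ}

universe u

/-- A `G`-boundary: a nonempty compact Hausdorff `G`-space (with its Borel σ-algebra) on which
the action of `G` is minimal and strongly proximal. -/
structure GBoundary (G : Type u) [Group G] where
  (carrier : Type u)
  [topo : TopologicalSpace carrier]
  [meas : MeasurableSpace carrier]
  [action : MulAction G carrier]
  [cpt : CompactSpace carrier]
  [t2 : T2Space carrier]
  [nonempty : Nonempty carrier]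
  [borel : BorelSpace carrier]
  [contSMul : ContinuousConstSMul G carrier]
  (minimal : IsMinimalAction G carrier)
  (stronglyProximal : IsStronglyProximal G carrier)

attribute [instance] GBoundary.topo GBoundary.meas GBoundary.action GBoundary.cpt
  GBoundary.t2 GBoundary.nonempty GBoundary.borel GBoundary.contSMul


open Filter Topology ENNReal NNReal BoundedContinuousFunction in
lemma GBoundary.maps_eq {G : Type u} [Group G] (Y X : GBoundary G)
    (φ ψ : Y.carrier → X.carrier) (hφc : Continuous φ)
    (hφe : ∀ (g : G) (y : Y.carrier), φ (g • y) = g • φ y)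
    (hψc : Continuous ψ)
    (hψe : ∀ (g : G) (y : Y.carrier), ψ (g • y) = g • ψ y) : φ = ψ := by
  have hmin := Y.minimal
  have hsp := X.stronglyProximal
  classical
  obtain ⟨y₀⟩ := (inferInstance : Nonempty Y.carrier)
  set a := φ y₀
  set b := ψ y₀
  have hmeas : IsProbabilityMeasure
      ((2⁻¹ : ℝ≥0∞) • Measure.dirac a + (2⁻¹ : ℝ≥0∞) • Measure.dirac b) := by
    constructor
    simp [ENNReal.inv_two_add_inv_two]
  set μ : ProbabilityMeasure X.carrier :=
    ⟨(2⁻¹ : ℝ≥0∞) • Measure.dirac a + (2⁻¹ : ℝ≥0∞) • Measure.dirac b, hmeas⟩ with hμ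
  obtain ⟨x, hx⟩ := hsp μ
  rw [mem_closure_iff_ultrafilter] at hx
  obtain ⟨u, hSu, hu⟩ := hx
  set h : ProbabilityMeasure X.carrier → G := fun ν =>
    if hh : ∃ g : G, ν = pushforwardProb g μ then hh.choose else 1 with hhdef
  set 𝒰 : Ultrafilter G := u.map h with h𝒰
  have hTF : Tendsto (fun g : G => pushforwardProb g μ) ↑𝒰 (𝓝 (diracProb x)) := by
    rw [h𝒰, Ultrafilter.coe_map, Filter.tendsto_map'_iff]
    have heq : (fun ν => pushforwardProb (h ν) μ) =ᶠ[↑u] id := by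
      filter_upwards [hSu] with ν hν
      have : h ν = (hν).choose := by rw [hhdef]; exact dif_pos hν
      simp only [this, id]
      exact (hν).choose_spec.symm
    exact (Filter.Tendsto.congr' heq.symm hu)
  set 𝒱 : Ultrafilter Y.carrier := 𝒰.map (fun g : G => g • y₀) with h𝒱
  set y' : Y.carrier := 𝒱.lim with hy'def
  have hy' : Tendsto (fun g : G => g • y₀) ↑𝒰 (𝓝 y') := by
    have := 𝒱.le_nhds_lim
    rwa [h𝒱, Ultrafilter.coe_map] at this
  -- key identity
  have hkey : ∀ f : X.carrier →ᵇ ℝ≥0,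
      (f x : ℝ≥0∞) = 2⁻¹ * f (φ y') + 2⁻¹ * f (ψ y') := by
    intro f
    have hfm : Measurable fun z => (f z : ℝ≥0∞) :=
      measurable_coe_nnreal_ennreal.comp f.continuous.measurable
    have key := ProbabilityMeasure.tendsto_iff_forall_lintegral_tendsto.mp hTF f
    have hdx : ∫⁻ ω, f ω ∂((diracProb x : Measure X.carrier)) = f x := by
      simp [diracProb, lintegral_dirac' x hfm]
    rw [hdx] at key
    have hint : ∀ g : G, ∫⁻ ω, (f ω : ℝ≥0∞) ∂((pushforwardProb g μ : Measure X.carrier)) =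
        2⁻¹ * f (g • a) + 2⁻¹ * f (g • b) := by
      intro g
      have hmap : ((pushforwardProb g μ : ProbabilityMeasure X.carrier) : Measure X.carrier) =
          Measure.map (fun z : X.carrier => g • z) (μ : Measure X.carrier) := by
        simp [pushforwardProb]
      rw [hmap, lintegral_map hfm ((continuous_const_smul g : Continuous fun z : X.carrier => g • z).measurable)]
      show ∫⁻ z, (f (g • z) : ℝ≥0∞)
          ∂((2⁻¹ : ℝ≥0∞) • Measure.dirac a + (2⁻¹ : ℝ≥0∞) • Measure.dirac b) = _
      have hfm' : Measurable fun z : X.carrier => (f (g • z) : ℝ≥0∞) :=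
        hfm.comp ((continuous_const_smul g : Continuous fun z : X.carrier => g • z).measurable)
      rw [lintegral_add_measure, lintegral_smul_measure, lintegral_smul_measure,
        lintegral_dirac' a hfm', lintegral_dirac' b hfm']
      simp only [smul_eq_mul]
    have key2 : Tendsto (fun g : G => (2⁻¹ * f (g • a) + 2⁻¹ * f (g • b) : ℝ≥0∞)) ↑𝒰
        (𝓝 (f x)) := by
      refine key.congr fun g => hint g
    have key3 : Tendsto (fun g : G => (2⁻¹ * f (g • a) + 2⁻¹ * f (g • b) : ℝ≥0∞)) ↑𝒰
        (𝓝 (2⁻¹ * f (φ y') + 2⁻¹ * f (ψ y'))) := by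
      have h2ne : (2⁻¹ : ℝ≥0∞) ≠ ∞ := by simp
      have hcont : Continuous fun y : Y.carrier => (2⁻¹ * f (φ y) + 2⁻¹ * f (ψ y) : ℝ≥0∞) := by
        apply Continuous.add
        · exact (ENNReal.continuous_const_mul h2ne).comp
            (ENNReal.continuous_coe.comp (f.continuous.comp hφc))
        · exact (ENNReal.continuous_const_mul h2ne).comp
            (ENNReal.continuous_coe.comp (f.continuous.comp hψc))
      have := (hcont.continuousAt (x := y')).tendsto.comp hy'
      refine this.congr fun g => ?_
      simp only [Function.comp, hφe, hψe]
      rfl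
    exact tendsto_nhds_unique key2 key3
  -- deduce φ y' = x and ψ y' = x by Urysohn
  have urysohn : ∀ p q : X.carrier, p ≠ x →
      ∃ f : X.carrier →ᵇ ℝ≥0, f x = 0 ∧ f p = 1 := by
    intro p q hp
    obtain ⟨f, hf0, hf1, hf01⟩ := exists_continuous_zero_one_of_isClosed
      (isClosed_singleton (x := x)) (isClosed_singleton (x := p))
      (by simpa [Set.disjoint_singleton] using (Ne.symm hp))
    refine ⟨BoundedContinuousFunction.mkOfCompact
      ⟨fun z => Real.toNNReal (f z), continuous_real_toNNReal.comp f.continuous⟩, ?_, ?_⟩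
    · simp [hf0 (Set.mem_singleton x)]
    · have : f p = 1 := hf1 (Set.mem_singleton p)
      simp [this]
  have hφx : φ y' = x := by
    by_contra hne
    obtain ⟨f, hfx, hfp⟩ := urysohn (φ y') (ψ y') hne
    have := hkey f
    rw [hfx, hfp] at this
    simp only [ENNReal.coe_zero, ENNReal.coe_one, mul_one] at this
    have h2 : (2⁻¹ : ℝ≥0∞) ≤ 0 := by
      calc (2⁻¹ : ℝ≥0∞) ≤ 2⁻¹ + 2⁻¹ * f (ψ y') := le_add_of_nonneg_right (by simp)
        _ = 0 := this.symm
    simp at h2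
  have hψx : ψ y' = x := by
    by_contra hne
    obtain ⟨f, hfx, hfp⟩ := urysohn (ψ y') (φ y') hne
    have := hkey f
    rw [hfx, hfp] at this
    simp only [ENNReal.coe_zero, ENNReal.coe_one, mul_one] at this
    have h2 : (2⁻¹ : ℝ≥0∞) ≤ 0 := by
      calc (2⁻¹ : ℝ≥0∞) ≤ 2⁻¹ * f (φ y') + 2⁻¹ := le_add_of_nonneg_left (by simp)
        _ = 0 := this.symm
    simp at h2
  -- conclude by minimality
  have hE_closed : IsClosed {y : Y.carrier | φ y = ψ y} := isClosed_eq hφc hψc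
  have horb : MulAction.orbit G y' ⊆ {y : Y.carrier | φ y = ψ y} := by
    rintro _ ⟨g, rfl⟩
    show φ (g • y') = ψ (g • y')
    rw [hφe, hψe, hφx, hψx]
  have hdense : Dense {y : Y.carrier | φ y = ψ y} := Dense.mono horb (hmin y')
  funext y
  have : {y : Y.carrier | φ y = ψ y} = Set.univ := by
    rw [← hE_closed.closure_eq, hdense.closure_eq]
  exact (Set.eq_univ_iff_forall.mp this y)


/-- Any two universal `G`-boundaries (each admitting a continuous `G`-equivariant
surjection onto every `G`-boundary) are isomorphic as `G`-spaces, i.e. there is a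
`G`-equivariant homeomorphism between them. -/
theorem universal_boundary_unique {G : Type u} [Group G] (B₁ B₂ : GBoundary G)
    (h₁ : ∀ Y : GBoundary G, ∃ f : B₁.carrier → Y.carrier,
      Continuous f ∧ (∀ (g : G) (x : B₁.carrier), f (g • x) = g • f x) ∧ Function.Surjective f)
    (h₂ : ∀ Y : GBoundary G, ∃ f : B₂.carrier → Y.carrier,
      Continuous f ∧ (∀ (g : G) (x : B₂.carrier), f (g • x) = g • f x) ∧ Function.Surjective f) :
    ∃ e : B₁.carrier ≃ₜ B₂.carrier, ∀ (g : G) (x : B₁.carrier), e (g • x) = g • e x := by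
  obtain ⟨f, hfc, hfe, hfs⟩ := h₁ B₂
  obtain ⟨f', hf'c, hf'e, hf's⟩ := h₂ B₁
  have h1 : f' ∘ f = id := by
    apply GBoundary.maps_eq B₁ B₁
    · exact hf'c.comp hfc
    · intro g x; simp [Function.comp, hfe, hf'e]
    · exact continuous_id
    · intro g x; simp
  have h2 : f ∘ f' = id := by
    apply GBoundary.maps_eq B₂ B₂
    · exact hfc.comp hf'c
    · intro g x; simp [Function.comp, hf'e, hfe]
    · exact continuous_id
    · intro g x; simp
  let e : B₁.carrier ≃ B₂.carrier := ⟨f, f', congrFun h1, congrFun h2⟩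
  exact ⟨Continuous.homeoOfEquivCompactToT2 (f := e) hfc, fun g x => hfe g x⟩
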